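/- Let (φ, y, ρ, H) be a solution of the flat FLRW system on an interval I such that ρ(t₀) ≥ 0 for some t₀ ∈ I. Then ρ(t) ≥ 0 for all t ∈ I, and the Hubble function H is non-increasing on I (i.e. H(s) ≥ H(t) whenever s ≤ t in I). -/

import Mathlib

open Real Set Filter

/-- A solution of the flat FLRW system on the set `I`:
`φ' = y`, `y' = -3Hy - V'(φ) + α(φ)ρ`, `ρ' = -ρ(3γH + α(φ)y)`, `H' = -(1/2)(y² + γρ)`. -/
def IsFLRWSolution (γ : ℝ) (α V : ℝ → ℝ) (I : Set ℝ) (φ y ρ H : ℝ → ℝ) : Prop :=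
  ∀ t ∈ I,
    HasDerivWithinAt φ (y t) I t ∧
    HasDerivWithinAt y (-3 * H t * y t - deriv V (φ t) + α (φ t) * ρ t) I t ∧
    HasDerivWithinAt ρ (-(ρ t) * (3 * γ * H t + α (φ t) * y t)) I t ∧
    HasDerivWithinAt H (-(1/2) * (y t ^ 2 + γ * ρ t)) I t

/-- The Friedmann constraint `3H² = (1/2)y² + V(φ) + ρ` at time `t`. -/
def FriedmannConstraint (V : ℝ → ℝ) (φ y ρ H : ℝ → ℝ) (t : ℝ) : Prop :=
  3 * H t ^ 2 = (1/2) * y t ^ 2 + V (φ t) + ρ t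

/-- if `ρ(t₀) ≥ 0` at some `t₀ ∈ I` then `ρ ≥ 0` on all of `I`,
and the Hubble function is non-increasing on `I`. -/
theorem flrw_density_nonneg_and_H_nonincreasing
    (γ : ℝ) (hγ : 0 < γ) (α V : ℝ → ℝ) (hα : Continuous α) (hV : ContDiff ℝ 2 V)
    (I : Set ℝ) (hI : Convex ℝ I) (φ y ρ H : ℝ → ℝ)
    (hsol : IsFLRWSolution γ α V I φ y ρ H)
    (t₀ : ℝ) (ht₀ : t₀ ∈ I) (hρ₀ : 0 ≤ ρ t₀) :
    (∀ t ∈ I, 0 ≤ ρ t) ∧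
    (∀ s ∈ I, ∀ t ∈ I, s ≤ t → H t ≤ H s) := by
  -- continuity of the relevant functions on I
  have hφc : ContinuousOn φ I := fun t ht => (hsol t ht).1.continuousWithinAt
  have hyc : ContinuousOn y I := fun t ht => (hsol t ht).2.1.continuousWithinAt
  have hρc : ContinuousOn ρ I := fun t ht => (hsol t ht).2.2.1.continuousWithinAt
  have hHc : ContinuousOn H I := fun t ht => (hsol t ht).2.2.2.continuousWithinAt
  set f : ℝ → ℝ := fun t => 3 * γ * H t + α (φ t) * y t with hf_def
  have hfc : ContinuousOn f I := by
    apply ContinuousOn.add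
    · exact continuousOn_const.mul hHc
    · exact (hα.comp_continuousOn hφc).mul hyc
  -- key lemma: sign of ρ is propagated along I in both directions
  have key : ∀ a ∈ I, ∀ b ∈ I, a ≤ b → ∃ c : ℝ, 0 < c ∧ ρ b = c * ρ a := by
    intro a ha b hb hab
    have hIcc : Icc a b ⊆ I := hI.ordConnected.out ha hb
    -- extend f continuously from Icc a b to ℝ
    obtain ⟨F, hF⟩ := ContinuousMap.exists_restrict_eq (Y := ℝ) (isClosed_Icc (a := a) (b := b))
      ⟨(Icc a b).restrict f, (hfc.mono hIcc).restrict⟩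
    have hFf : ∀ x ∈ Icc a b, F x = f x := fun x hx => ContinuousMap.congr_fun hF ⟨x, hx⟩
    set G : ℝ → ℝ := fun u => ∫ x in a..u, F x with hG_def
    have hG : ∀ u : ℝ, HasDerivAt G (F u) u := fun u =>
      (F.continuous.integral_hasStrictDerivAt a u).hasDerivAt
    set g : ℝ → ℝ := fun u => ρ u * Real.exp (G u) with hg_def
    have hgconst : ∀ x ∈ Icc a b, g x = g a := by
      apply constant_of_has_deriv_right_zero
      · have hGc : Continuous G := continuous_iff_continuousAt.2 fun u => (hG u).continuousAt
        exact (hρc.mono hIcc).mul (Real.continuous_exp.comp hGc).continuousOn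
      · intro x hx
        have hxI : x ∈ I := hIcc (Ico_subset_Icc_self hx)
        have hρd : HasDerivWithinAt ρ (-(ρ x) * f x) (Ici x) x :=
          ((hsol x hxI).2.2.1.mono hIcc).mono_of_mem_nhdsWithin (Icc_mem_nhdsGE_of_mem hx)
        have hexpd : HasDerivWithinAt (fun u => Real.exp (G u))
            (Real.exp (G x) * F x) (Ici x) x := by
          simpa [mul_comm] using ((hG x).exp.hasDerivWithinAt (s := Ici x))
        refine (hρd.mul hexpd).congr_deriv ?_
        rw [hFf x (Ico_subset_Icc_self hx)]; ring
    have hgb := hgconst b (right_mem_Icc.2 hab)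
    refine ⟨Real.exp (G a + -G b), Real.exp_pos _, ?_⟩
    have hgb' : ρ b * Real.exp (G b) = ρ a * Real.exp (G a) := hgb
    have := congrArg (fun z => z * Real.exp (-G b)) hgb'
    simp only [mul_assoc, ← Real.exp_add, add_neg_cancel, Real.exp_zero, mul_one] at this
    rw [this, mul_comm]
  have hρnn : ∀ t ∈ I, 0 ≤ ρ t := by
    intro t ht
    rcases le_total t₀ t with h | h
    · obtain ⟨c, hc, hcb⟩ := key t₀ ht₀ t ht h
      rw [hcb]; exact mul_nonneg hc.le hρ₀
    · obtain ⟨c, hc, hcb⟩ := key t ht t₀ ht₀ h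
      nlinarith
  refine ⟨hρnn, ?_⟩
  intro s hs t ht hst
  have hH : AntitoneOn H I := by
    apply antitoneOn_of_hasDerivWithinAt_nonpos hI hHc
      (f' := fun t => -(1/2) * (y t ^ 2 + γ * ρ t))
    · intro x hx
      exact ((hsol x (interior_subset hx)).2.2.2).mono interior_subset
    · intro x hx
      have := hρnn x (interior_subset hx)
      nlinarith [sq_nonneg (y x)]
  exact hH hs ht hst
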